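/- arXiv:1601.05614 — 7 statements merged into one kernel-verified Lean document; each statement's English description precedes it below -/
import Mathlib

section
/- If (X,f) is exact and f is injective, then X is a singleton. -/
theorem stmt_7 {X : Type*} [MetricSpace X] [CompactSpace X] [Nonempty X]
    (f : X → X) (hf : Continuous f)
    (hexact : ∀ U V : Set X, IsOpen U → U.Nonempty → IsOpen V → V.Nonempty →
      ∃ n : ℕ, 1 ≤ n ∧ (f^[n] '' U ∩ f^[n] '' V).Nonempty)
    (hinj : Function.Injective f) :
    ∃ x : X, (Set.univ : Set X) = {x} := by
  obtain ⟨x⟩ := ‹Nonempty X›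
  refine ⟨x, Set.eq_singleton_iff_unique_mem.2 ⟨trivial, fun y _ => ?_⟩⟩
  by_contra hyx
  have hd : 0 < dist y x := dist_pos.2 hyx
  obtain ⟨n, -, z, ⟨a, ha, haz⟩, b, hb, hbz⟩ :=
    hexact (Metric.ball y (dist y x / 2)) (Metric.ball x (dist y x / 2))
      Metric.isOpen_ball ⟨y, Metric.mem_ball_self (by linarith)⟩
      Metric.isOpen_ball ⟨x, Metric.mem_ball_self (by linarith)⟩
  have hab : a = b := hinj.iterate n (haz.trans hbz.symm)
  subst hab
  have := dist_triangle y a x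
  rw [Metric.mem_ball] at ha hb
  rw [dist_comm a y] at ha
  linarith
end

section
/- (X,f) is fully exact if and only if for every pair of nonempty open sets U,V ⊆ X, the set ⋃_{n≥1} (f^n(U) ∩ f^n(V)) has nonempty interior. -/
theorem stmt_8 {X : Type*} [MetricSpace X] [CompactSpace X]
    (f : X → X) (hf : Continuous f) :
    (∀ U V : Set X, IsOpen U → U.Nonempty → IsOpen V → V.Nonempty →
      ∃ n : ℕ, 1 ≤ n ∧ (interior (f^[n] '' U ∩ f^[n] '' V)).Nonempty) ↔
    (∀ U V : Set X, IsOpen U → U.Nonempty → IsOpen V → V.Nonempty →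
      (interior (⋃ n : ℕ, ⋃ _ : 1 ≤ n, (f^[n] '' U ∩ f^[n] '' V))).Nonempty) := by
  constructor
  · intro h U V hU hUne hV hVne
    obtain ⟨n, hn, x, hx⟩ := h U V hU hUne hV hVne
    exact ⟨x, interior_mono (Set.subset_iUnion₂ n hn) hx⟩
  · intro h U V hU hUne hV hVne
    by_contra hcon
    push_neg at hcon
    -- shrink U and V to sets with compact closure inside
    obtain ⟨x, hxU⟩ := hUne
    obtain ⟨y, hyV⟩ := hVne
    obtain ⟨ε, hε, hball⟩ := Metric.isOpen_iff.1 hU x hxU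
    obtain ⟨δ, hδ, hball'⟩ := Metric.isOpen_iff.1 hV y hyV
    set U' : Set X := Metric.ball x (ε / 2) with hU'def
    set V' : Set X := Metric.ball y (δ / 2) with hV'def
    have hU'sub : closure U' ⊆ U := by
      exact Metric.closure_ball_subset_closedBall.trans
        ((Metric.closedBall_subset_ball (by linarith)).trans hball)
    have hV'sub : closure V' ⊆ V := by
      exact Metric.closure_ball_subset_closedBall.trans
        ((Metric.closedBall_subset_ball (by linarith)).trans hball')
    have hU'ne : U'.Nonempty := ⟨x, Metric.mem_ball_self (by linarith)⟩
    have hV'ne : V'.Nonempty := ⟨y, Metric.mem_ball_self (by linarith)⟩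
    -- closed sets K n
    set K : ℕ → Set X := fun n => f^[n] '' closure U' ∩ f^[n] '' closure V' with hK
    have hKclosed : ∀ n, IsClosed (K n) :=
      fun n => (isClosed_closure.isCompact.image (hf.iterate n)).isClosed.inter
        (isClosed_closure.isCompact.image (hf.iterate n)).isClosed
    have hKmeagre : ∀ n : ℕ, IsMeagre (⋃ _ : 1 ≤ n, K n) := by
      intro n
      rcases Nat.eq_zero_or_pos n with h0 | hpos
      · simpa [h0] using (show IsMeagre (∅ : Set X) by simp [IsMeagre])
      · have hint : interior (K n) = ∅ := by
          have hsub : K n ⊆ f^[n] '' U ∩ f^[n] '' V :=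
            Set.inter_subset_inter (Set.image_mono hU'sub) (Set.image_mono hV'sub)
          exact Set.eq_empty_of_subset_empty (hcon n hpos ▸ interior_mono hsub)
        have : IsNowhereDense (K n) := (hKclosed n).isNowhereDense_iff.2 hint
        have hm : IsMeagre (K n) := by
          rw [isMeagre_iff_countable_union_isNowhereDense]
          exact ⟨{K n}, by simpa using this, Set.countable_singleton _, by simp⟩
        exact hm.mono (by simp)
    have hmeagre : IsMeagre (⋃ n : ℕ, ⋃ _ : 1 ≤ n, K n) := isMeagre_iUnion hKmeagre
    -- apply hypothesis to U', V'
    obtain ⟨z, hz⟩ := h U' V' Metric.isOpen_ball hU'ne Metric.isOpen_ball hV'ne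
    -- the interior is a nonempty open subset of the meagre set
    have hsub : (⋃ n : ℕ, ⋃ _ : 1 ≤ n, (f^[n] '' U' ∩ f^[n] '' V')) ⊆
        ⋃ n : ℕ, ⋃ _ : 1 ≤ n, K n := by
      refine Set.iUnion₂_mono fun n hn => ?_
      exact Set.inter_subset_inter (Set.image_mono subset_closure)
        (Set.image_mono subset_closure)
    have hres : (⋃ n : ℕ, ⋃ _ : 1 ≤ n, K n)ᶜ ∈ residual X := hmeagre
    have hdense : Dense (⋃ n : ℕ, ⋃ _ : 1 ≤ n, K n)ᶜ := dense_of_mem_residual hres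
    obtain ⟨w, hw1, hw2⟩ := hdense.exists_mem_open isOpen_interior ⟨z, hz⟩
    exact hw1 (hsub (interior_subset hw2))
end

section
/- If (X,f) is topologically transitive and X is infinite, then for every x ∈ X and n ≥ 1, the set f^{-n}(x) is nowhere dense; consequently the negative orbit ⋃_{n≥1} f^{-n}(x) is of first category (meagre). -/
open Set

/-- From transitivity: every nonempty open set has a return. -/
lemma aux_ret {X : Type*} [TopologicalSpace X] {f : X → X}
    (htt : ∀ U : Set X, IsOpen U → U.Nonempty →
      Dense (⋃ n : ℕ, ⋃ _ : 1 ≤ n, f^[n] '' U))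
    {U : Set X} (hU : IsOpen U) (hne : U.Nonempty) :
    ∃ m : ℕ, 1 ≤ m ∧ ∃ u ∈ U, f^[m] u ∈ U := by
  have hd := htt U hU hne
  obtain ⟨y, hyU, hy⟩ := hd.inter_open_nonempty U hU hne
  simp only [mem_iUnion] at hy
  obtain ⟨m, hm, u, huU, rfl⟩ := hy
  exact ⟨m, hm, u, huU, hyU⟩

/-- Returns with arbitrarily large times. -/
lemma aux_ret_large {X : Type*} [TopologicalSpace X] {f : X → X} (hf : Continuous f)
    (htt : ∀ U : Set X, IsOpen U → U.Nonempty →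
      Dense (⋃ n : ℕ, ⋃ _ : 1 ≤ n, f^[n] '' U))
    {U : Set X} (hU : IsOpen U) (hne : U.Nonempty) (N : ℕ) :
    ∃ m : ℕ, N ≤ m ∧ ∃ u ∈ U, f^[m] u ∈ U := by
  have key : ∀ N : ℕ, ∃ m : ℕ, N ≤ m ∧ ∃ V : Set X, IsOpen V ∧ V.Nonempty ∧ V ⊆ U ∧
      ∀ v ∈ V, f^[m] v ∈ U := by
    intro N
    induction N with
    | zero => exact ⟨0, le_refl _, U, hU, hne, subset_rfl, fun v hv => hv⟩
    | succ N ih =>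
      obtain ⟨m, hm, V, hVo, hVne, hVU, hVim⟩ := ih
      obtain ⟨s, hs1, v, hvV, hsv⟩ := aux_ret htt hVo hVne
      refine ⟨m + s, by omega, V ∩ f^[s] ⁻¹' V, hVo.inter ((hf.iterate s).isOpen_preimage _ hVo),
        ⟨v, hvV, hsv⟩, inter_subset_left.trans hVU, ?_⟩
      intro w hw
      rw [Function.iterate_add_apply]
      exact hVim _ hw.2
  obtain ⟨m, hm, V, hVo, hVne, hVU, hVim⟩ := key N
  obtain ⟨v, hv⟩ := hVne
  exact ⟨m, hm, v, hVU hv, hVim v hv⟩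

/-- Every nonempty open set is infinite. -/
lemma aux_open_infinite {X : Type*} [MetricSpace X] {f : X → X}
    (hinf : (Set.univ : Set X).Infinite)
    (htt : ∀ U : Set X, IsOpen U → U.Nonempty →
      Dense (⋃ n : ℕ, ⋃ _ : 1 ≤ n, f^[n] '' U))
    {U : Set X} (hU : IsOpen U) (hne : U.Nonempty) : U.Infinite := by
  by_contra hfin
  rw [Set.not_infinite] at hfin
  obtain ⟨p, hp⟩ := hne
  -- {p} is open
  have hsing : IsOpen ({p} : Set X) := by
    have : ({p} : Set X) = U ∩ (U \ {p})ᶜ := by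
      ext y; constructor
      · rintro rfl; exact ⟨hp, fun h => h.2 rfl⟩
      · rintro ⟨hyU, hy⟩
        by_contra h
        exact hy ⟨hyU, h⟩
    rw [this]
    exact hU.inter ((hfin.diff (t := {p})).isClosed).isOpen_compl
  obtain ⟨m, hm1, u, hu, hmu⟩ := aux_ret htt hsing ⟨p, rfl⟩
  rw [mem_singleton_iff] at hu hmu
  rw [hu] at hmu
  have hper : Function.IsPeriodicPt f m p := hmu
  -- the dense union is finite
  have hd := htt {p} hsing ⟨p, rfl⟩
  set D := ⋃ n : ℕ, ⋃ _ : 1 ≤ n, f^[n] '' ({p} : Set X) with hD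
  have hsub : D ⊆ (fun k => f^[k] p) '' (Set.Iio m) := by
    intro y hy
    simp only [hD, mem_iUnion, image_singleton, mem_singleton_iff] at hy
    obtain ⟨k, hk, rfl⟩ := hy
    exact ⟨k % m, Nat.mod_lt _ hm1, hper.iterate_mod_apply k⟩
  have hDfin : D.Finite := Set.Finite.subset ((Set.finite_Iio m).image _) hsub
  have : (Set.univ : Set X) = D := by
    rw [← hd.closure_eq, hDfin.isClosed.closure_eq]
  exact hinf (this ▸ hDfin)

theorem stmt_12 {X : Type*} [MetricSpace X] [CompactSpace X]
    (f : X → X) (hf : Continuous f) (hinf : (Set.univ : Set X).Infinite)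
    (htt : ∀ U : Set X, IsOpen U → U.Nonempty →
      Dense (⋃ n : ℕ, ⋃ _ : 1 ≤ n, f^[n] '' U)) :
    ∀ x : X, (∀ n : ℕ, 1 ≤ n → IsNowhereDense (f^[n] ⁻¹' {x})) ∧
      IsMeagre (⋃ n : ℕ, ⋃ _ : 1 ≤ n, f^[n] ⁻¹' {x}) := by
  intro x
  have hclosed : ∀ n : ℕ, IsClosed (f^[n] ⁻¹' {x}) :=
    fun n => (isClosed_singleton).preimage (hf.iterate n)
  have key : ∀ n : ℕ, 1 ≤ n → IsNowhereDense (f^[n] ⁻¹' {x}) := by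
    intro n hn
    rw [(hclosed n).isNowhereDense_iff]
    by_contra hne
    have hVne : (interior (f^[n] ⁻¹' {x})).Nonempty := nonempty_iff_ne_empty.2 hne
    set V := interior (f^[n] ⁻¹' {x}) with hV
    have hVo : IsOpen V := isOpen_interior
    have hVsub : V ⊆ f^[n] ⁻¹' {x} := interior_subset
    -- pass 1 : x is periodic
    obtain ⟨m, hm1, v, hvV, hmv⟩ := aux_ret htt hVo hVne
    have hvx : f^[n] v = x := hVsub hvV
    have hmvx : f^[n] (f^[m] v) = x := hVsub hmv
    have hper : Function.IsPeriodicPt f m x := by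
      have h1 : f^[m] x = f^[m + n] v := by rw [← hvx, ← Function.iterate_add_apply]
      have h2 : f^[m + n] v = x := by
        rw [add_comm, Function.iterate_add_apply]; exact hmvx
      exact h1.trans h2
    -- the finite orbit of x
    set O := (fun k => f^[k] x) '' (Set.Iio m) with hO
    have hOfin : O.Finite := (Set.finite_Iio m).image _
    have hVinf : V.Infinite := aux_open_infinite hinf htt hVo hVne
    have hWne : (V \ O).Nonempty := (hVinf.diff hOfin).nonempty
    have hWo : IsOpen (V \ O) := hVo.sdiff hOfin.isClosed
    -- pass 2 : a long return into V \ O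
    obtain ⟨t, htn, w, hwW, htw⟩ := aux_ret_large hf htt hWo hWne n
    have hwx : f^[n] w = x := hVsub hwW.1
    have : f^[t] w ∈ O := by
      have h1 : f^[t] w = f^[t - n] x := by
        rw [← hwx, ← Function.iterate_add_apply, Nat.sub_add_cancel htn]
      rw [h1, ← hper.iterate_mod_apply]
      exact ⟨(t - n) % m, Nat.mod_lt _ hm1, rfl⟩
    exact htw.2 this
  refine ⟨key, ?_⟩
  apply isMeagre_iUnion
  intro n
  rcases Nat.eq_zero_or_pos n with rfl | hn
  · have h0 : (⋃ _ : (1:ℕ) ≤ 0, f^[0] ⁻¹' {x}) = (∅ : Set X) := by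
      simp only [Set.iUnion_eq_empty]
      omega
    rw [h0]; exact IsMeagre.empty
  · have hrw : (⋃ _ : 1 ≤ n, f^[n] ⁻¹' {x}) = f^[n] ⁻¹' {x} := by
      haveI : Nonempty (1 ≤ n) := ⟨hn⟩
      exact Set.iUnion_const _
    rw [hrw]
    rw [isMeagre_iff_countable_union_isNowhereDense]
    refine ⟨{f^[n] ⁻¹' {x}}, ?_, countable_singleton _, by simp⟩
    intro t ht
    rw [mem_singleton_iff] at ht
    rw [ht]
    exact key n hn
end

section
/- If (X,f) is strongly transitive, then for every nonempty open U ⊆ X and every x ∈ X, the set N(U,x) = {n ≥ 1 : x ∈ f^n(U)} is infinite. -/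
theorem stmt_14 {X : Type*} [MetricSpace X] [CompactSpace X]
    (f : X → X) (hf : Continuous f)
    (hst : ∀ U : Set X, IsOpen U → U.Nonempty →
      (⋃ n : ℕ, ⋃ _ : 1 ≤ n, f^[n] '' U) = Set.univ) :
    ∀ U : Set X, IsOpen U → U.Nonempty → ∀ x : X,
      {n : ℕ | 1 ≤ n ∧ x ∈ f^[n] '' U}.Infinite := by
  intro U hU hUne x
  have key : ∀ y : X, ∃ k : ℕ, 1 ≤ k ∧ y ∈ f^[k] '' U := by
    intro y
    have : y ∈ (⋃ n : ℕ, ⋃ _ : 1 ≤ n, f^[n] '' U) := by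
      rw [hst U hU hUne]; trivial
    simpa using this
  -- for every m there exists n ≥ m in the set
  have step : ∀ m : ℕ, ∃ n, m ≤ n ∧ 1 ≤ n ∧ x ∈ f^[n] '' U := by
    intro m
    induction m with
    | zero =>
      obtain ⟨k, hk1, hk⟩ := key x
      exact ⟨k, Nat.zero_le _, hk1, hk⟩
    | succ m ih =>
      obtain ⟨n, hmn, hn1, u, hu, hfu⟩ := ih
      obtain ⟨k, hk1, u', hu', hfu'⟩ := key u
      refine ⟨n + k, by omega, by omega, u', hu', ?_⟩
      rw [Function.iterate_add_apply, hfu', hfu]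
  apply Set.infinite_of_not_bddAbove
  rintro ⟨b, hb⟩
  obtain ⟨n, hn, h1, hmem⟩ := step (b + 1)
  have := hb ⟨h1, hmem⟩
  omega
end

section
/- If f : X → X is an open continuous map on a compact metric space, then (X,f) is strongly transitive if and only if it is very strongly transitive (for every nonempty open U there is N with ⋃_{n=1}^N f^n(U) = X), if and only if X contains no proper nonempty closed −invariant subset. -/
theorem stmt_15 {X : Type*} [MetricSpace X] [CompactSpace X]
    (f : X → X) (hf : Continuous f) (hopen : IsOpenMap f) :
    ((∀ U : Set X, IsOpen U → U.Nonempty →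
        (⋃ n : ℕ, ⋃ _ : 1 ≤ n, f^[n] '' U) = Set.univ) ↔
     (∀ U : Set X, IsOpen U → U.Nonempty →
        ∃ N : ℕ, 1 ≤ N ∧ (⋃ n ∈ Set.Icc 1 N, f^[n] '' U) = Set.univ)) ∧
    ((∀ U : Set X, IsOpen U → U.Nonempty →
        (⋃ n : ℕ, ⋃ _ : 1 ≤ n, f^[n] '' U) = Set.univ) ↔
     (∀ A : Set X, IsClosed A → A.Nonempty → f ⁻¹' A ⊆ A → A = Set.univ)) := by
  have hIterOpen : ∀ (n : ℕ) (U : Set X), IsOpen U → IsOpen (f^[n] '' U) := by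
    intro n U hU
    induction n with
    | zero => simpa using hU
    | succ m ih =>
      rw [Function.iterate_succ', Set.image_comp]
      exact hopen _ ih
  constructor
  · constructor
    · intro h U hU hUne
      have hcover : Set.univ ⊆ ⋃ n : ℕ, f^[n+1] '' U := by
        intro x _
        have hx : x ∈ ⋃ n : ℕ, ⋃ _ : 1 ≤ n, f^[n] '' U := by
          rw [h U hU hUne]; trivial
        simp only [Set.mem_iUnion] at hx ⊢
        obtain ⟨n, hn1, hxn⟩ := hx
        obtain ⟨m, rfl⟩ := Nat.exists_eq_add_of_le hn1
        exact ⟨m, by simpa [Nat.add_comm] using hxn⟩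
      obtain ⟨t, ht⟩ := isCompact_univ.elim_finite_subcover
        (fun n : ℕ => f^[n+1] '' U) (fun n => hIterOpen (n+1) U hU) hcover
      refine ⟨t.sup id + 1, le_add_self, ?_⟩
      apply Set.eq_univ_of_univ_subset
      intro x hx
      obtain ⟨n, hnt, hxn⟩ := Set.mem_iUnion₂.1 (ht hx)
      exact Set.mem_iUnion₂.2 ⟨n + 1, ⟨Nat.succ_le_succ (Nat.zero_le n),
        Nat.succ_le_succ (Finset.le_sup (f := id) hnt)⟩, hxn⟩
    · intro h U hU hUne
      obtain ⟨N, _, hN⟩ := h U hU hUne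
      apply Set.eq_univ_of_univ_subset
      intro x hx
      rw [← hN] at hx
      obtain ⟨n, ⟨hn1, _⟩, hxn⟩ := Set.mem_iUnion₂.1 hx
      exact Set.mem_iUnion.2 ⟨n, Set.mem_iUnion.2 ⟨hn1, hxn⟩⟩
  · constructor
    · intro h A hA hAne hinv
      by_contra hne
      have hUne : Aᶜ.Nonempty := by
        rw [Set.nonempty_compl]; exact hne
      have hmaps : Set.MapsTo f Aᶜ Aᶜ := by
        intro x hx hfx
        exact hx (hinv hfx)
      have hsub : (⋃ n : ℕ, ⋃ _ : 1 ≤ n, f^[n] '' Aᶜ) ⊆ Aᶜ := by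
        refine Set.iUnion₂_subset fun n _ => ?_
        exact (hmaps.iterate n).image_subset
      rw [h Aᶜ hA.isOpen_compl hUne] at hsub
      obtain ⟨a, ha⟩ := hAne
      exact (hsub (Set.mem_univ a)) ha
    · intro h U hU hUne
      set S := ⋃ n : ℕ, ⋃ _ : 1 ≤ n, f^[n] '' U with hS
      have hSopen : IsOpen S := isOpen_iUnion fun n => isOpen_iUnion fun _ => hIterOpen n U hU
      have hSinv : f ⁻¹' Sᶜ ⊆ Sᶜ := by
        intro x hx hxS
        apply hx
        obtain ⟨n, hn1, y, hy, hyx⟩ : ∃ n, 1 ≤ n ∧ ∃ y ∈ U, f^[n] y = x := by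
          simpa only [hS, Set.mem_iUnion, Set.mem_image, exists_prop] using hxS
        refine Set.mem_iUnion.2 ⟨n + 1, Set.mem_iUnion.2 ⟨Nat.succ_le_succ (Nat.zero_le n), ?_⟩⟩
        exact ⟨y, hy, by rw [Function.iterate_succ_apply', hyx]⟩
      have hfU : (f '' U).Nonempty := hUne.image f
      have hSne : S.Nonempty := by
        obtain ⟨z, hz⟩ := hfU
        exact ⟨z, Set.mem_iUnion.2 ⟨1, Set.mem_iUnion.2 ⟨le_refl 1, by simpa using hz⟩⟩⟩
      by_cases hc : Sᶜ.Nonempty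
      · have h2 := h Sᶜ hSopen.isClosed_compl hc hSinv
        have : S = ∅ := by
          have := congrArg compl h2
          simpa using this
        rw [this] at hSne
        exact absurd hSne Set.not_nonempty_empty
      · rw [Set.not_nonempty_iff_eq_empty, Set.compl_empty_iff] at hc
        exact hc
end

section
/- If f : X → X is a homeomorphism of a compact metric space, then (X,f) is strongly transitive if and only if it is minimal. -/
/-- Dense forward orbits (n ≥ 1) iff every nonempty closed forward-invariant set is everything. -/
private lemma aux_min_iff_closed {X : Type*} [TopologicalSpace X] (g : X ≃ₜ X) :
    (∀ x : X, Dense {y : X | ∃ n : ℕ, 1 ≤ n ∧ (⇑g)^[n] x = y}) ↔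
    (∀ K : Set X, IsClosed K → K.Nonempty → ⇑g '' K ⊆ K → K = Set.univ) := by
  constructor
  · intro h K hKc ⟨x, hx⟩ hKinv
    have horb : ∀ n : ℕ, (⇑g)^[n] x ∈ K := by
      intro n
      induction n with
      | zero => simpa using hx
      | succ n ih =>
        rw [Function.iterate_succ_apply']
        exact hKinv ⟨_, ih, rfl⟩
    have hsub : {y : X | ∃ n : ℕ, 1 ≤ n ∧ (⇑g)^[n] x = y} ⊆ K := by
      rintro y ⟨n, -, rfl⟩; exact horb n
    have := (h x).closure_eq
    have : Set.univ ⊆ K := by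
      rw [← this]
      exact closure_minimal hsub hKc
    exact Set.eq_univ_of_univ_subset this
  · intro h x
    set S : Set X := {y : X | ∃ n : ℕ, 1 ≤ n ∧ (⇑g)^[n] x = y} with hS
    have hSne : S.Nonempty := ⟨g x, 1, le_refl 1, by simp⟩
    have hSinv : ⇑g '' S ⊆ S := by
      rintro y ⟨z, ⟨n, hn, rfl⟩, rfl⟩
      exact ⟨n + 1, by omega, by rw [Function.iterate_succ_apply']⟩
    have hK : closure S = Set.univ := by
      apply h _ isClosed_closure (hSne.mono subset_closure)
      calc ⇑g '' closure S ⊆ closure (⇑g '' S) :=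
            image_closure_subset_closure_image g.continuous
        _ ⊆ closure S := closure_mono hSinv
    rwa [dense_iff_closure_eq]
    
/-- Compactness swap: invariance condition for `g.symm` implies it for `g`. -/
private lemma aux_swap {X : Type*} [TopologicalSpace X] [CompactSpace X] [T2Space X]
    (g : X ≃ₜ X)
    (h : ∀ K : Set X, IsClosed K → K.Nonempty → ⇑g.symm '' K ⊆ K → K = Set.univ) :
    ∀ K : Set X, IsClosed K → K.Nonempty → ⇑g '' K ⊆ K → K = Set.univ := by
  intro K hKc hKne hKinv
  set Z : ℕ → Set X := fun n => (⇑g)^[n] '' K with hZ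
  have hZ0 : Z 0 = K := by simp [hZ]
  have hZd : ∀ n, Z (n + 1) ⊆ Z n := by
    intro n
    have : Z (n + 1) = (⇑g)^[n] '' (⇑g '' K) := by
      ext y; simp [hZ, Function.iterate_succ_apply]
    rw [this]
    exact Set.image_mono hKinv
  have hZcpt : ∀ n, IsCompact (Z n) := fun n =>
    (hKc.isCompact).image (g.continuous.iterate n)
  have hZcl : ∀ n, IsClosed (Z n) := fun n => (hZcpt n).isClosed
  have hZne : ∀ n, (Z n).Nonempty := fun n => hKne.image _
  have hne : (⋂ n, Z n).Nonempty :=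
    IsCompact.nonempty_iInter_of_sequence_nonempty_isCompact_isClosed Z hZd hZne
      (hZcpt 0) hZcl
  have hinv : ⇑g.symm '' (⋂ n, Z n) ⊆ ⋂ n, Z n := by
    rintro y ⟨z, hz, rfl⟩
    refine Set.mem_iInter.2 fun n => ?_
    have hz' : z ∈ Z (n + 1) := Set.mem_iInter.1 hz (n + 1)
    obtain ⟨k, hk, rfl⟩ := hz'
    rw [Function.iterate_succ_apply', g.symm_apply_apply]
    exact ⟨k, hk, rfl⟩
  have := h _ (isClosed_iInter hZcl) hne hinv
  have hsub : (⋂ n, Z n) ⊆ K := by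
    rw [← hZ0]; exact Set.iInter_subset Z 0
  rw [this] at hsub
  exact Set.eq_univ_of_univ_subset hsub

theorem stmt_17 {X : Type*} [MetricSpace X] [CompactSpace X] [Nonempty X]
    (f : X ≃ₜ X) :
    (∀ U : Set X, IsOpen U → U.Nonempty →
      (⋃ n : ℕ, ⋃ _ : 1 ≤ n, (⇑f)^[n] '' U) = Set.univ) ↔
    (∀ x : X, Dense {y : X | ∃ n : ℕ, 1 ≤ n ∧ (⇑f)^[n] x = y}) := by
  have hli : ∀ n : ℕ, ∀ u : X, (⇑f.symm)^[n] ((⇑f)^[n] u) = u := fun n =>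
    Function.LeftInverse.iterate f.symm_apply_apply n
  have hri : ∀ n : ℕ, ∀ u : X, (⇑f)^[n] ((⇑f.symm)^[n] u) = u := fun n =>
    Function.LeftInverse.iterate f.apply_symm_apply n
  -- step 1: strong transitivity ↔ minimality of f.symm
  have step1 : (∀ U : Set X, IsOpen U → U.Nonempty →
      (⋃ n : ℕ, ⋃ _ : 1 ≤ n, (⇑f)^[n] '' U) = Set.univ) ↔
      (∀ x : X, Dense {y : X | ∃ n : ℕ, 1 ≤ n ∧ (⇑f.symm)^[n] x = y}) := by
    constructor
    · intro h x
      rw [dense_iff_inter_open]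
      intro U hU hUne
      have hx : x ∈ ⋃ n : ℕ, ⋃ _ : 1 ≤ n, (⇑f)^[n] '' U := by
        rw [h U hU hUne]; trivial
      simp only [Set.mem_iUnion] at hx
      obtain ⟨n, hn, u, hu, hux⟩ := hx
      refine ⟨u, hu, n, hn, ?_⟩
      rw [← hux, hli]
    · intro h U hU hUne
      apply Set.eq_univ_of_forall
      intro x
      obtain ⟨u, hu, n, hn, hux⟩ := (dense_iff_inter_open.1 (h x)) U hU hUne
      simp only [Set.mem_iUnion]
      exact ⟨n, hn, u, hu, by rw [← hux, hri]⟩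
  rw [step1, aux_min_iff_closed f.symm, aux_min_iff_closed f]
  constructor
  · intro h
    exact aux_swap f h
  · intro h
    apply aux_swap f.symm
    simpa using h
end

section
/- If (X,f) is locally eventually onto (for every nonempty open U there exists N with f^N(U) = X), then (X,f) has dense periodic sets: for every nonempty open U there exists N ≥ 1 and a nonempty closed A ⊆ U with f^N(A) = A. -/
lemma key_fixed_set {X : Type*} [MetricSpace X] [CompactSpace X] (g : X → X)
    (hg : Continuous g) (V : Set X) (hVc : IsClosed V) (hVne : V.Nonempty)
    (hVg : V ⊆ g '' V) :
    ∃ A : Set X, A ⊆ V ∧ IsClosed A ∧ A.Nonempty ∧ g '' A = A := by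
  let B : ℕ → Set X := fun n => Nat.rec V (fun _ Bn => Bn ∩ g ⁻¹' Bn) n
  have hBs : ∀ n, B (n + 1) = B n ∩ g ⁻¹' B n := fun n => rfl
  have hprop : ∀ n, IsClosed (B n) ∧ (B n).Nonempty ∧ B n ⊆ g '' (B n) := by
    intro n
    induction n with
    | zero => exact ⟨hVc, hVne, hVg⟩
    | succ n ih =>
      obtain ⟨hc, hne, hsub⟩ := ih
      refine ⟨hc.inter (hc.preimage hg), ?_, ?_⟩
      · obtain ⟨x, hx⟩ := hne
        obtain ⟨z, hz, hzx⟩ := hsub hx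
        exact ⟨z, hz, by simp [Set.mem_preimage, hzx]; exact hx⟩
      · rintro y ⟨hy1, _⟩
        obtain ⟨z, hz, hzy⟩ := hsub hy1
        exact ⟨z, ⟨hz, by simp [Set.mem_preimage, hzy]; exact hy1⟩, hzy⟩
  have hmono : ∀ n, B (n + 1) ⊆ B n := fun n => Set.inter_subset_left
  refine ⟨⋂ n, B n, Set.iInter_subset B 0, isClosed_iInter fun n => (hprop n).1, ?_, ?_⟩
  · exact IsCompact.nonempty_iInter_of_sequence_nonempty_isCompact_isClosed B hmono
      (fun n => (hprop n).2.1) (hVc.isCompact) (fun n => (hprop n).1)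
  · apply Set.Subset.antisymm
    · rintro y ⟨x, hx, rfl⟩
      rw [Set.mem_iInter] at hx ⊢
      intro n
      exact (hx (n + 1)).2
    · intro x hx
      rw [Set.mem_iInter] at hx
      have hKne : ∀ n, (B n ∩ g ⁻¹' {x}).Nonempty := by
        intro n
        obtain ⟨z, hz, hzx⟩ := (hprop n).2.2 (hx n)
        exact ⟨z, hz, by simp [hzx]⟩
      have hKc : ∀ n, IsClosed (B n ∩ g ⁻¹' {x}) :=
        fun n => (hprop n).1.inter (isClosed_singleton.preimage hg)
      have := IsCompact.nonempty_iInter_of_sequence_nonempty_isCompact_isClosed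
        (fun n => B n ∩ g ⁻¹' {x})
        (fun n => Set.inter_subset_inter_left _ (hmono n)) hKne
        ((hKc 0).isCompact) hKc
      obtain ⟨z, hz⟩ := this
      rw [Set.mem_iInter] at hz
      refine ⟨z, Set.mem_iInter.2 fun n => (hz n).1, (hz 0).2⟩

theorem stmt_19 {X : Type*} [MetricSpace X] [CompactSpace X] [Nonempty X]
    (f : X → X) (hf : Continuous f)
    (hleo : ∀ U : Set X, IsOpen U → U.Nonempty → ∃ N : ℕ, 1 ≤ N ∧ f^[N] '' U = Set.univ) :
    ∀ U : Set X, IsOpen U → U.Nonempty →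
      ∃ N : ℕ, 1 ≤ N ∧ ∃ A : Set X, A ⊆ U ∧ IsClosed A ∧ A.Nonempty ∧ f^[N] '' A = A := by
  intro U hUo hUne
  obtain ⟨x, hx⟩ := hUne
  obtain ⟨r, hr0, hrU⟩ := (Metric.nhds_basis_closedBall.mem_iff).1 (hUo.mem_nhds hx)
  obtain ⟨N, hN1, himg⟩ := hleo (Metric.ball x r) Metric.isOpen_ball
    ⟨x, Metric.mem_ball_self hr0⟩
  have hVg : Metric.closedBall x r ⊆ f^[N] '' Metric.closedBall x r := by
    intro y _
    have : y ∈ f^[N] '' Metric.ball x r := himg ▸ Set.mem_univ y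
    exact Set.image_mono (Metric.ball_subset_closedBall) this
  obtain ⟨A, hAV, hAc, hAne, hAfix⟩ := key_fixed_set (f^[N]) (hf.iterate N)
    (Metric.closedBall x r) Metric.isClosed_closedBall
    ⟨x, Metric.mem_closedBall_self hr0.le⟩ hVg
  exact ⟨N, hN1, A, fun a ha => hrU (hAV ha), hAc, hAne, hAfix⟩
end
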